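/- For every a ∈ F_p, the sum over all x ∈ F_{p²} of u^{a·N(x)} in ℤ[C_p] equals Γ_p if a ≠ 0, and equals p²·u⁰ if a = 0. -/

import Mathlib

open Polynomial Finset


lemma frob_algHom (p : ℕ) [Fact p.Prime] :
    ∃ φ : GaloisField p 2 ≃ₐ[ZMod p] GaloisField p 2, ∀ x, φ x = x ^ p := by
  haveI : ExpChar (GaloisField p 2) p := inferInstance
  let f : GaloisField p 2 →ₐ[ZMod p] GaloisField p 2 :=
    { frobenius (GaloisField p 2) p with
      commutes' := fun c => by
        simp [frobenius_def, ← map_pow, ZMod.pow_card] }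
  have hinj : Function.Injective f := (frobenius (GaloisField p 2) p).injective
  have hbij : Function.Bijective f := Finite.injective_iff_bijective.mp hinj
  exact ⟨AlgEquiv.ofBijective f hbij, fun x => rfl⟩

lemma norm_gf (p : ℕ) [Fact p.Prime] [Fintype (GaloisField p 2)] (x : GaloisField p 2) :
    algebraMap (ZMod p) (GaloisField p 2) (Algebra.norm (ZMod p) x) = x ^ (p + 1) := by
  classical
  have hp := (Fact.out : p.Prime)
  obtain ⟨φ, hφ⟩ := frob_algHom p
  have hcard2 : Fintype.card (GaloisField p 2 ≃ₐ[ZMod p] GaloisField p 2) = 2 := by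
    rw [← Nat.card_eq_fintype_card, IsGalois.card_aut_eq_finrank, GaloisField.finrank p two_ne_zero]
  have hcardF : Fintype.card (GaloisField p 2) = p ^ 2 := by
    rw [← Nat.card_eq_fintype_card, GaloisField.card p 2 two_ne_zero]
  have hφne : φ ≠ (1 : GaloisField p 2 ≃ₐ[ZMod p] GaloisField p 2) := by
    intro h
    have hall : ∀ y : GaloisField p 2, y ^ p = y := by
      intro y
      have := hφ y
      rw [h] at this
      simpa using this.symm
    -- all p^2 elements are roots of X^p - X, degree ≤ p
    set g : (GaloisField p 2)[X] := X ^ p - X with hg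
    have hgne : g ≠ 0 := by
      intro h0
      have : g.coeff p = 1 := by
        simp [hg, coeff_X_pow, coeff_X, hp.ne_one, Ne.symm hp.ne_one]
      rw [h0] at this
      simp at this
    have hsub : (Finset.univ : Finset (GaloisField p 2)) ⊆ g.roots.toFinset := by
      intro y _
      rw [Multiset.mem_toFinset, mem_roots hgne]
      simp [hg, hall y]
    have h1 : p ^ 2 ≤ g.roots.toFinset.card := by
      rw [← hcardF, ← Finset.card_univ]
      exact Finset.card_le_card hsub
    have h2 : g.roots.toFinset.card ≤ Multiset.card g.roots := Multiset.toFinset_card_le _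
    have h3 : Multiset.card g.roots ≤ g.natDegree := g.card_roots'
    have h4 : g.natDegree ≤ p := by
      calc g.natDegree ≤ max (X ^ p : (GaloisField p 2)[X]).natDegree (X : (GaloisField p 2)[X]).natDegree :=
        natDegree_sub_le _ _
      _ ≤ p := by simp [hp.one_lt.le]
    have := h1.trans (h2.trans (h3.trans h4))
    nlinarith [hp.two_le]
  have huniv : (Finset.univ : Finset (GaloisField p 2 ≃ₐ[ZMod p] GaloisField p 2)) =
      {(1 : GaloisField p 2 ≃ₐ[ZMod p] GaloisField p 2), φ} := by
    symm
    apply Finset.eq_univ_of_card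
    rw [hcard2, Finset.card_insert_of_notMem (by simpa using (Ne.symm hφne)), Finset.card_singleton]
  rw [Algebra.norm_eq_prod_automorphisms, huniv, Finset.prod_insert (by simpa using Ne.symm hφne),
    Finset.prod_singleton, hφ]
  simp [pow_succ']

theorem stmt_1 (p : ℕ) [Fact p.Prime] [Fintype (GaloisField p 2)]
    (u : ZMod p → MonoidAlgebra ℤ (Multiplicative (ZMod p)))
    (hu : ∀ k, u k = MonoidAlgebra.of ℤ (Multiplicative (ZMod p)) (Multiplicative.ofAdd k))
    (Γ : MonoidAlgebra ℤ (Multiplicative (ZMod p)))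
    (hΓ : Γ = u 0 + ((p : ℤ) + 1) • ∑ i ∈ Finset.univ.filter (fun i : ZMod p => i ≠ 0), u i)
    (a : ZMod p) :
    ∑ x : GaloisField p 2, u (a * Algebra.norm (ZMod p) x) =
      if a ≠ 0 then Γ else ((p : ℤ) ^ 2) • u 0 := by
  classical
  have hp := (Fact.out : p.Prime)
  have hcardF : Fintype.card (GaloisField p 2) = p ^ 2 := by
    rw [← Nat.card_eq_fintype_card, GaloisField.card p 2 two_ne_zero]
  by_cases ha : a = 0
  · subst ha
    simp only [zero_mul, ne_eq, not_true_eq_false, if_false, Finset.sum_const, card_univ, hcardF]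
    rw [← Nat.cast_pow, natCast_zsmul]
  · rw [if_pos ha]
    have hN0 : ∀ x : GaloisField p 2, Algebra.norm (ZMod p) x = 0 ↔ x = 0 := fun x =>
      Algebra.norm_eq_zero_iff
    set f : GaloisField p 2 → ZMod p := fun x => a * Algebra.norm (ZMod p) x with hf
    have hf0 : ∀ x : GaloisField p 2, f x = 0 ↔ x = 0 := by
      intro x; simp [hf, mul_eq_zero, ha, hN0 x]
    have hfib0 : Finset.univ.filter (fun x : GaloisField p 2 => f x = 0) = {0} := by
      ext x; simp [hf0 x]
    set t : Finset (ZMod p) := Finset.univ.filter (fun k : ZMod p => k ≠ 0) with ht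
    have hcardt : t.card = p - 1 := by
      rw [ht, Finset.filter_ne', Finset.card_erase_of_mem (Finset.mem_univ _), card_univ,
        ZMod.card]
    set s : Finset (GaloisField p 2) := Finset.univ.filter (fun x => x ≠ 0) with hs
    have hcards : s.card = p ^ 2 - 1 := by
      rw [hs, Finset.filter_ne', Finset.card_erase_of_mem (Finset.mem_univ _), card_univ, hcardF]
    have hmaps : ∀ x ∈ s, f x ∈ t := by
      intro x hx
      rw [hs, Finset.mem_filter] at hx
      rw [ht, Finset.mem_filter]
      exact ⟨Finset.mem_univ _, fun h => hx.2 ((hf0 x).mp h)⟩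
    have hbound : ∀ k ∈ t, (s.filter (fun x => f x = k)).card ≤ p + 1 := by
      intro k hk
      set c : GaloisField p 2 := algebraMap (ZMod p) (GaloisField p 2) (a⁻¹ * k) with hc
      set g : Polynomial (GaloisField p 2) := Polynomial.X ^ (p + 1) - Polynomial.C c with hg
      have hgne : g ≠ 0 := Polynomial.X_pow_sub_C_ne_zero (Nat.succ_pos p) c
      have hsub : s.filter (fun x => f x = k) ⊆ g.roots.toFinset := by
        intro x hx
        rw [Finset.mem_filter] at hx
        have hxk : a * Algebra.norm (ZMod p) x = k := hx.2
        have hNx : Algebra.norm (ZMod p) x = a⁻¹ * k := by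
          field_simp [ha] at hxk ⊢; exact hxk
        have hroot : x ^ (p + 1) = c := by
          rw [hc, ← hNx, ← norm_gf p x]
        rw [Multiset.mem_toFinset, Polynomial.mem_roots hgne]
        simp [hg, hroot]
      calc (s.filter (fun x => f x = k)).card ≤ g.roots.toFinset.card :=
            Finset.card_le_card hsub
        _ ≤ Multiset.card g.roots := Multiset.toFinset_card_le _
        _ ≤ g.natDegree := g.card_roots'
        _ ≤ p + 1 := by rw [hg, Polynomial.natDegree_X_pow_sub_C]
    have hsum : ∑ k ∈ t, (s.filter (fun x => f x = k)).card = p ^ 2 - 1 := by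
      rw [← Finset.card_eq_sum_card_fiberwise hmaps, hcards]
    have heq : ∀ k ∈ t, (s.filter (fun x => f x = k)).card = p + 1 := by
      have htot : ∑ k ∈ t, (s.filter (fun x => f x = k)).card = ∑ k ∈ t, (p + 1) := by
        rw [hsum, Finset.sum_const, hcardt, smul_eq_mul]
        obtain ⟨m, rfl⟩ := Nat.exists_eq_add_of_le hp.two_le
        have h1 : (2 + m) ^ 2 = m * m + 4 * m + 4 := by ring
        have h2 : (2 + m - 1) * (2 + m + 1) = m * m + 4 * m + 3 := by
          have h3 : 2 + m - 1 = m + 1 := by omega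
          rw [h3]; ring
        omega
      exact (Finset.sum_eq_sum_iff_of_le hbound).mp htot
    have hfibs : ∀ k ∈ t, Finset.univ.filter (fun x : GaloisField p 2 => f x = k) =
        s.filter (fun x => f x = k) := by
      intro k hk
      rw [ht, Finset.mem_filter] at hk
      ext x
      simp only [Finset.mem_filter, Finset.mem_univ, true_and, hs, ne_eq]
      constructor
      · intro h
        exact ⟨fun hx0 => hk.2 (by rw [← h, (hf0 x).mpr hx0]), h⟩
      · exact fun h => h.2
    have key : ∑ x : GaloisField p 2, u (f x) = ∑ k : ZMod p,
        (Finset.univ.filter (fun x : GaloisField p 2 => f x = k)).card • u k := by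
      rw [← Finset.sum_fiberwise_of_maps_to (fun x _ => Finset.mem_univ (f x)) (fun x => u (f x))]
      refine Finset.sum_congr rfl fun k _ => ?_
      rw [Finset.sum_congr rfl (fun x hx => by
        rw [(Finset.mem_filter.mp hx).2]), Finset.sum_const]
    have hgoal : ∑ x : GaloisField p 2, u (a * Algebra.norm (ZMod p) x)
        = ∑ x : GaloisField p 2, u (f x) := rfl
    rw [hgoal, key]
    have hsplit : (Finset.univ : Finset (ZMod p)) = insert 0 t := by
      rw [ht, Finset.filter_ne', Finset.insert_erase (Finset.mem_univ _)]
    rw [hsplit, Finset.sum_insert (by simp [ht]), hfib0]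
    simp only [Finset.card_singleton, one_smul]
    rw [hΓ]
    congr 1
    rw [Finset.sum_congr rfl (fun k hk => by rw [hfibs k hk, heq k hk]), ← Finset.smul_sum]
    rw [← Nat.cast_smul_eq_nsmul ℤ]
    push_cast
    rfl
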